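/- For every natural number n > 10, √5·(log_Φ(√5·(F_{n+2} − n + 1)) + F_{n+2} − n + 1) − 5 + 3/(F_{n+2} − n + 1) > Φ^{n+2}, where Φ = (1+√5)/2. -/

import Mathlib

set_option maxHeartbeats 1000000

open Real goldenRatio

lemma fib_ge_aux : ∀ n, 11 ≤ n → 8 * n ≤ Nat.fib (n + 2) := by
  intro n hn
  induction n, hn using Nat.le_induction with
  | base => decide
  | succ m hm ih =>
    have h8 : 8 ≤ Nat.fib (m + 1) := by
      calc 8 ≤ Nat.fib 12 := by decide
        _ ≤ Nat.fib (m + 1) := Nat.fib_mono (by omega)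
    have : Nat.fib (m + 1 + 2) = Nat.fib (m + 1) + Nat.fib (m + 2) := Nat.fib_add_two
    omega

theorem stmt16 (n : ℕ) (hn : 10 < n) :
    let Φ : ℝ := (1 + Real.sqrt 5) / 2
    Real.sqrt 5 * (Real.logb Φ (Real.sqrt 5 * ((Nat.fib (n + 2) : ℝ) - n + 1)) + (Nat.fib (n + 2) : ℝ) - n + 1)
        - 5 + 3 / ((Nat.fib (n + 2) : ℝ) - n + 1) > Φ ^ (n + 2) := by
  intro Φ
  have hΦφ : Φ = φ := rfl
  clear_value Φ
  subst hΦφ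
  set s : ℝ := Real.sqrt 5 with hs
  clear_value s
  have hs5 : (0:ℝ) < s := by rw [hs]; positivity
  have hs5' : s ^ 2 = 5 := by rw [hs]; exact Real.sq_sqrt (by norm_num)
  have hs5lb : 2.236 ≤ s := by nlinarith
  have hs5ub : s ≤ 2.2361 := by nlinarith
  set F : ℝ := (Nat.fib (n + 2) : ℝ) with hF
  clear_value F
  have hn' : (11:ℝ) ≤ (n:ℝ) := by exact_mod_cast hn
  have hFge : 8 * (n:ℝ) ≤ F := by
    rw [hF]
    exact_mod_cast fib_ge_aux n hn
  set x : ℝ := F - n + 1 with hx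
  clear_value x
  have hxpos : (0:ℝ) < x := by rw [hx]; nlinarith
  have h1 : 1 < φ := one_lt_goldenRatio
  -- Binet: s * F = Φ^(n+2) - ψ^(n+2)
  have hbinet : F = (φ ^ (n + 2) - ψ ^ (n + 2)) / s := by rw [hF, hs]; exact Real.coe_fib_eq (n + 2)
  have hψabs : |ψ| ≤ 1 := by
    rw [abs_le]
    constructor
    · exact le_of_lt neg_one_lt_goldenConj
    · nlinarith [goldenConj_neg]
  have hψpow : ψ ^ (n + 2) ≤ 1 := by
    have := abs_pow ψ (n + 2) ▸ pow_le_one₀ (abs_nonneg ψ) hψabs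
    calc ψ ^ (n + 2) ≤ |ψ ^ (n + 2)| := le_abs_self _
      _ = |ψ| ^ (n + 2) := abs_pow ψ (n + 2)
      _ ≤ 1 := pow_le_one₀ (abs_nonneg ψ) hψabs
  have hupper : φ ^ (n + 2) ≤ s * F + 1 := by
    have : s * F = φ ^ (n + 2) - ψ ^ (n + 2) := by
      rw [hbinet, hs]; field_simp
    nlinarith
  -- the exponent bound: Φ^(6/s - 3) ≤ 87/100
  have hΦ3 : φ ^ (3:ℕ) = 2 + s := by
    have h : φ = (1 + s) / 2 := by rw [hs]
    rw [h]
    linear_combination ((s + 3) / 8) * hs5'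
  have hΦpos : (0:ℝ) < φ := lt_trans one_pos h1
  have hA : (φ ^ ((3:ℝ)/10)) ^ (10:ℕ) = φ ^ (3:ℕ) := by
    rw [← Real.rpow_natCast (φ ^ ((3:ℝ)/10)) 10, ← Real.rpow_mul (le_of_lt hΦpos)]
    norm_num
  have hge : (100/87:ℝ) ≤ φ ^ ((3:ℝ)/10) := by
    have h10 : ((100/87:ℝ)) ^ (10:ℕ) ≤ (φ ^ ((3:ℝ)/10)) ^ (10:ℕ) := by
      rw [hA, hΦ3]
      nlinarith
    exact le_of_pow_le_pow_left₀ (by norm_num) (by positivity) h10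
  have hd : (6:ℝ)/s - 3 ≤ -(3/10) := by
    rw [div_sub' (ne_of_gt hs5), div_le_iff₀ hs5]
    nlinarith
  have hsmall : φ ^ ((6:ℝ)/s - 3) ≤ 87/100 := by
    calc φ ^ ((6:ℝ)/s - 3) ≤ φ ^ (-(3/10):ℝ) :=
          Real.rpow_le_rpow_of_exponent_le (le_of_lt h1) hd
      _ = (φ ^ ((3:ℝ)/10))⁻¹ := by rw [Real.rpow_neg (le_of_lt hΦpos)]
      _ ≤ (100/87:ℝ)⁻¹ := by
          apply inv_anti₀ (by norm_num) hge
      _ = 87/100 := by norm_num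
  -- logb bound
  have hlog : (n:ℝ) - 1 + 6 / s ≤ Real.logb φ (s * x) := by
    rw [Real.le_logb_iff_rpow_le h1 (by positivity)]
    have hsplit : φ ^ ((n:ℝ) - 1 + 6 / s) = φ ^ (n + 2) * φ ^ ((6:ℝ)/s - 3) := by
      rw [← Real.rpow_natCast φ (n + 2), ← Real.rpow_add hΦpos]
      congr 1
      push_cast
      ring
    rw [hsplit]
    have h2 : φ ^ (n + 2) * φ ^ ((6:ℝ)/s - 3) ≤ (s * F + 1) * (87/100) := by
      apply mul_le_mul hupper hsmall (le_of_lt (Real.rpow_pos_of_pos hΦpos _))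
        (by nlinarith)
    apply le_trans h2
    rw [hx]
    nlinarith [mul_le_mul_of_nonneg_left hFge (le_of_lt hs5)]
  -- conclude
  have h6 : s * (6 / s) = 6 := mul_div_cancel₀ 6 (ne_of_gt hs5)
  have hmain : s * (Real.logb φ (s * x) + F - (n:ℝ) + 1) ≥ s * F + 6 := by
    have := mul_le_mul_of_nonneg_left hlog (le_of_lt hs5)
    nlinarith
  have h3x : 0 < 3 / x := by positivity
  calc φ ^ (n + 2) ≤ s * F + 1 := hupper
    _ < s * F + 6 - 5 + 3 / x := by linarith
    _ ≤ s * (Real.logb φ (s * x) + F - (n:ℝ) + 1) - 5 + 3 / x := by linarith
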